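/- arXiv:dg-ga/9511007 — 3 statements merged into one kernel-verified Lean document; each statement's English description precedes it below -/
import Mathlib

section
/- For all real numbers s, t with 0 < s and −s < t < 0, the x-ray 𝒳(s,t) does not satisfy the extension criterion: there exists a strictly convex cone compatible with 𝒳(s,t) that does not extend to any convex polytope compatible with 𝒳(s,t). -/
open Set

noncomputable section

/-- We model `ℝ²` as `ℝ × ℝ`. -/
abbrev Pt : Type := ℝ × ℝ

/-- A (nonempty, compact) convex polytope in `ℝ²`: the convex hull of a
nonempty finite set of points. -/
def IsPolytope (S : Set Pt) : Prop :=
  ∃ F : Finset Pt, F.Nonempty ∧ S = convexHull ℝ (F : Set Pt)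

/-- The dimension of a (convex) set: the dimension of its affine span. -/
def setDim (S : Set Pt) : ℕ :=
  Module.finrank ℝ (affineSpan ℝ S).direction

/-- `σ` is a face of the convex set `Δ`: a nonempty convex extreme subset
(this includes `Δ` itself). -/
def IsFaceOf (σ Δ : Set Pt) : Prop :=
  σ.Nonempty ∧ Convex ℝ σ ∧ IsExtreme ℝ Δ σ

/-- A convex polytope `Δ` is compatible with the x-ray `𝒳`: one can choose,
for every face `σ` of `Δ`, an element `X σ ∈ 𝒳` with `dim (X σ) = dim σ` and
`σ ⊆ X σ`, monotonically in `σ`. -/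
def PolyCompat (𝒳 : Set (Set Pt)) (Δ : Set Pt) : Prop :=
  ∃ X : Set Pt → Set Pt,
    (∀ σ, IsFaceOf σ Δ → X σ ∈ 𝒳 ∧ setDim (X σ) = setDim σ ∧ σ ⊆ X σ) ∧
    (∀ σ σ', IsFaceOf σ Δ → IsFaceOf σ' Δ → σ ⊆ σ' → X σ ⊆ X σ')

/-- `C` is a closed convex cone with vertex `v`, i.e. `C = v + C₀` for a
closed convex cone `C₀` with apex `0`. -/
def IsConeWithVertex (C : Set Pt) (v : Pt) : Prop :=
  IsClosed C ∧ Convex ℝ C ∧ v ∈ C ∧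
    ∀ x ∈ C, ∀ a : ℝ, 0 ≤ a → v + a • (x - v) ∈ C

/-- A cone is strictly convex iff it contains no affine line. -/
def ContainsNoLine (C : Set Pt) : Prop :=
  ¬ ∃ p d : Pt, d ≠ 0 ∧ ∀ r : ℝ, p + r • d ∈ C

/-- A convex cone `C` with vertex `v` is compatible with the x-ray `𝒳`:
there is a neighborhood `U` of `v` such that one can choose, for every face
`σ` of `C`, an element `X σ ∈ 𝒳` with `dim (X σ) = dim σ` and
`σ ∩ U ⊆ X σ`, monotonically in `σ`. -/
def ConeCompat (𝒳 : Set (Set Pt)) (C : Set Pt) (v : Pt) : Prop :=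
  ∃ U ∈ nhds v, ∃ X : Set Pt → Set Pt,
    (∀ σ, IsFaceOf σ C → X σ ∈ 𝒳 ∧ setDim (X σ) = setDim σ ∧ σ ∩ U ⊆ X σ) ∧
    (∀ σ σ', IsFaceOf σ C → IsFaceOf σ' C → σ ⊆ σ' → X σ ⊆ X σ')

/-- A convex polytope `Δ` is an extension of the cone `C` with vertex `v`
if `C` and `Δ` agree near `v`. -/
def IsExtensionOf (Δ C : Set Pt) (v : Pt) : Prop :=
  ∃ U ∈ nhds v, C ∩ U = Δ ∩ U

/-- An x-ray satisfies the extension criterion if every compatible strictly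
convex cone extends to a compatible convex polytope. -/
def ExtensionCriterion (𝒳 : Set (Set Pt)) : Prop :=
  ∀ C : Set Pt, ∀ v : Pt, IsConeWithVertex C v → ContainsNoLine C →
    ConeCompat 𝒳 C v →
    ∃ Δ : Set Pt, IsPolytope Δ ∧ IsExtensionOf Δ C v ∧ PolyCompat 𝒳 Δ

/-- An x-ray: a finite collection of (nonempty, compact) convex polytopes. -/
def IsXRay (𝒳 : Set (Set Pt)) : Prop :=
  𝒳.Finite ∧ ∀ X ∈ 𝒳, IsPolytope X

/-- The parametrized x-ray `𝒳(s,t)` of Section 5 of the paper: the possible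
x-rays of the manifold `M` for other invariant symplectic forms, determined
by the image `(s,t)` of the fixed point `F'`. -/
def XrayST (s t : ℝ) : Set (Set Pt) :=
  { {((0, 0) : Pt)}, {((s + t, 0) : Pt)}, {((s, s) : Pt)}, {((t - s, s) : Pt)},
    {((0, t) : Pt)}, {((s, t) : Pt)},
    segment ℝ ((0, 0) : Pt) ((0, t) : Pt),
    segment ℝ ((0, 0) : Pt) ((s + t, 0) : Pt),
    segment ℝ ((0, t) : Pt) ((s, t) : Pt),
    segment ℝ ((s, t) : Pt) ((s + t, 0) : Pt),
    segment ℝ ((0, 0) : Pt) ((s, s) : Pt),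
    segment ℝ ((s, s) : Pt) ((t - s, s) : Pt),
    segment ℝ ((s, s) : Pt) ((s, t) : Pt),
    segment ℝ ((t - s, s) : Pt) ((s + t, 0) : Pt),
    segment ℝ ((t - s, s) : Pt) ((0, t) : Pt),
    convexHull ℝ {((0, 0) : Pt), ((s + t, 0) : Pt), ((s, s) : Pt),
      ((t - s, s) : Pt), ((0, t) : Pt), ((s, t) : Pt)} }


-- ## Auxiliary development

lemma setDim_singleton (p : Pt) : setDim {p} = 0 := by
  unfold setDim
  rw [direction_affineSpan, vectorSpan_singleton]
  exact finrank_bot ℝ Pt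

lemma setDim_eq_one {S : Set Pt} {p q : Pt} (hp : p ∈ S) (hq : q ∈ S)
    (hne : p ≠ q) (hline : ∀ z ∈ S, ∃ r : ℝ, z = r • (q - p) + p) : setDim S = 1 := by
  have hspan : affineSpan ℝ S = affineSpan ℝ ({p, q} : Set Pt) := by
    refine le_antisymm (affineSpan_le.2 ?_)
      (affineSpan_pair_le_of_mem_of_mem (mem_affineSpan ℝ hp) (mem_affineSpan ℝ hq))
    intro z hz
    obtain ⟨r, hr⟩ := hline z hz
    have h := smul_vsub_vadd_mem_affineSpan_pair (k := ℝ) r p q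
    simpa [vsub_eq_sub, vadd_eq_add, ← hr] using h
  unfold setDim
  rw [hspan, direction_affineSpan, vectorSpan_pair]
  exact finrank_span_singleton (vsub_ne_zero.2 hne)

lemma setDim_eq_two {S : Set Pt} {p q r : Pt} (hp : p ∈ S) (hq : q ∈ S) (hr : r ∈ S)
    (hdet : (q - p).1 * (r - p).2 - (q - p).2 * (r - p).1 ≠ 0) : setDim S = 2 := by
  have hu : q - p ∈ (affineSpan ℝ S).direction := by
    rw [direction_affineSpan]
    exact vsub_mem_vectorSpan ℝ hq hp
  have hw : r - p ∈ (affineSpan ℝ S).direction := by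
    rw [direction_affineSpan]
    exact vsub_mem_vectorSpan ℝ hr hp
  have htop : (affineSpan ℝ S).direction = ⊤ := by
    rw [Submodule.eq_top_iff']
    intro v
    set u : Pt := q - p with hu'
    set w : Pt := r - p with hw'
    have hv : v = ((v.1 * w.2 - v.2 * w.1) / (u.1 * w.2 - u.2 * w.1)) • u
        + ((u.1 * v.2 - u.2 * v.1) / (u.1 * w.2 - u.2 * w.1)) • w := by
      have h1 : (((v.1 * w.2 - v.2 * w.1) / (u.1 * w.2 - u.2 * w.1)) • u
        + ((u.1 * v.2 - u.2 * v.1) / (u.1 * w.2 - u.2 * w.1)) • w).1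
        = ((v.1 * w.2 - v.2 * w.1) / (u.1 * w.2 - u.2 * w.1)) * u.1
        + ((u.1 * v.2 - u.2 * v.1) / (u.1 * w.2 - u.2 * w.1)) * w.1 := rfl
      have h2 : (((v.1 * w.2 - v.2 * w.1) / (u.1 * w.2 - u.2 * w.1)) • u
        + ((u.1 * v.2 - u.2 * v.1) / (u.1 * w.2 - u.2 * w.1)) • w).2
        = ((v.1 * w.2 - v.2 * w.1) / (u.1 * w.2 - u.2 * w.1)) * u.2
        + ((u.1 * v.2 - u.2 * v.1) / (u.1 * w.2 - u.2 * w.1)) * w.2 := rfl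
    -- messy
      refine Prod.ext ?_ ?_
      · rw [h1, div_mul_eq_mul_div, div_mul_eq_mul_div, ← add_div, eq_div_iff hdet]; ring
      · rw [h2, div_mul_eq_mul_div, div_mul_eq_mul_div, ← add_div, eq_div_iff hdet]; ring
    rw [hv]
    exact Submodule.add_mem _ (Submodule.smul_mem _ _ hu) (Submodule.smul_mem _ _ hw)
  unfold setDim
  rw [htop, finrank_top]
  simp [Module.finrank_prod]

lemma seg_coord {p q z : Pt} (h : z ∈ segment ℝ p q) :
    ∃ a b : ℝ, 0 ≤ a ∧ 0 ≤ b ∧ a + b = 1 ∧ z.1 = a * p.1 + b * q.1 ∧ z.2 = a * p.2 + b * q.2 := by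
  obtain ⟨a, b, ha, hb, hab, hz⟩ := h
  exact ⟨a, b, ha, hb, hab, by rw [← hz]; rfl, by rw [← hz]; rfl⟩

lemma setDim_segment {p q : Pt} (hne : p ≠ q) : setDim (segment ℝ p q) = 1 := by
  refine setDim_eq_one (left_mem_segment ℝ p q) (right_mem_segment ℝ p q) hne ?_
  rintro z ⟨a, b, ha, hb, hab, rfl⟩
  refine ⟨b, ?_⟩
  have h : a = 1 - b := by linarith
  subst h
  module

lemma openSeg_coord {p q z : Pt} (h : z ∈ openSegment ℝ p q) :
    ∃ a b : ℝ, 0 < a ∧ 0 < b ∧ a + b = 1 ∧ z.1 = a * p.1 + b * q.1 ∧ z.2 = a * p.2 + b * q.2 := by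
  obtain ⟨a, b, ha, hb, hab, hz⟩ := h
  exact ⟨a, b, ha, hb, hab, by rw [← hz]; rfl, by rw [← hz]; rfl⟩

lemma isFaceOf_levelSet {Δ : Set Pt} (hconv : Convex ℝ Δ) (φ : Pt → ℝ)
    (hlin : ∀ (a b : ℝ) (x y : Pt), φ (a • x + b • y) = a * φ x + b * φ y) (c : ℝ)
    (hb : ∀ x ∈ Δ, φ x ≤ c) (hne : ∃ x ∈ Δ, φ x = c) :
    IsFaceOf {x ∈ Δ | φ x = c} Δ := by
  obtain ⟨x₀, hx₀, hφx₀⟩ := hne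
  refine ⟨⟨x₀, hx₀, hφx₀⟩, ?_, Set.sep_subset _ _, ?_⟩
  · intro x hx y hy a b ha hb' hab
    refine ⟨hconv hx.1 hy.1 ha hb' hab, ?_⟩
    rw [hlin, hx.2, hy.2, ← add_mul, hab, one_mul]
  · rintro x₁ hx₁ x₂ hx₂ z hz hmem
    obtain ⟨a, b, ha, hb', hab, hz'⟩ := hmem
    have h1 : φ x₁ ≤ c := hb x₁ hx₁
    have h2 : φ x₂ ≤ c := hb x₂ hx₂
    have hc : a * φ x₁ + b * φ x₂ = c := by rw [← hlin, hz', hz.2]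
    have h4 : a * c + b * c = c := by rw [← add_mul, hab, one_mul]
    have e1 : φ x₁ = c := le_antisymm h1 (le_of_mul_le_mul_left
      (by nlinarith [mul_le_mul_of_nonneg_left h2 hb'.le]) ha)
    have e2 : φ x₂ = c := le_antisymm h2 (le_of_mul_le_mul_left
      (by nlinarith [mul_le_mul_of_nonneg_left h1 ha.le]) hb')
    exact ⟨hx₁, e1⟩

def Kc : Set Pt := {p | 0 ≤ p.2 ∧ p.2 ≤ p.1}
def e1 : Set Pt := {p | 0 ≤ p.1 ∧ p.2 = 0}
def e2 : Set Pt := {p | 0 ≤ p.1 ∧ p.2 = p.1}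

lemma Kc_cone : IsConeWithVertex Kc ((0, 0) : Pt) := by
  refine ⟨?_, ?_, ⟨le_refl 0, le_refl 0⟩, ?_⟩
  · exact (isClosed_le continuous_const continuous_snd).inter
      (isClosed_le continuous_snd continuous_fst)
  · intro x hx y hy a b ha hb hab
    have h1 : (a • x + b • y).1 = a * x.1 + b * y.1 := rfl
    have h2 : (a • x + b • y).2 = a * x.2 + b * y.2 := rfl
    constructor
    · rw [h2]; nlinarith [hx.1, hy.1]
    · rw [h1, h2]; nlinarith [hx.2, hy.2]
  · intro x hx a ha
    constructor
    · show 0 ≤ 0 + a * (x.2 - 0); nlinarith [hx.1]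
    · show 0 + a * (x.2 - 0) ≤ 0 + a * (x.1 - 0); nlinarith [hx.2]

lemma Kc_noline : ContainsNoLine Kc := by
  rintro ⟨p, d, hd, h⟩
  have hd2 : d.2 = 0 := by
    by_contra hd2
    have h1 := (h ((-(p.2) - 1) / d.2)).1
    have : (p + ((-(p.2) - 1) / d.2) • d).2 = p.2 + ((-(p.2) - 1) / d.2) * d.2 := rfl
    rw [this] at h1
    rw [div_mul_cancel₀ _ hd2] at h1
    linarith
  have hd1 : d.1 = 0 := by
    by_contra hd1
    have h1 := h ((p.2 - p.1 - 1) / d.1)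
    have e1' : (p + ((p.2 - p.1 - 1) / d.1) • d).1 = p.1 + ((p.2 - p.1 - 1) / d.1) * d.1 := rfl
    have e2' : (p + ((p.2 - p.1 - 1) / d.1) • d).2 = p.2 + ((p.2 - p.1 - 1) / d.1) * d.2 := rfl
    have h2 := h1.2
    rw [e1', e2', hd2, div_mul_cancel₀ _ hd1] at h2
    simp at h2
    linarith
  exact hd (Prod.ext hd1 hd2)

lemma faces_Kc {σ : Set Pt} (hf : IsFaceOf σ Kc) :
    σ = {((0, 0) : Pt)} ∨ σ = e1 ∨ σ = e2 ∨ σ = Kc := by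
  obtain ⟨hne, hconv, hsub, hext⟩ := hf
  by_cases hint : ∃ p ∈ σ, 0 < p.2 ∧ p.2 < p.1
  · right; right; right
    obtain ⟨p, hpσ, hp2, hp12⟩ := hint
    refine Set.Subset.antisymm hsub ?_
    intro q hq
    set M : ℝ := 1 + |p.2 - q.2| + |p.1 - p.2 - (q.1 - q.2)| with hM
    have hM0 : 0 < M := by positivity
    set ε : ℝ := min (p.2 / M) ((p.1 - p.2) / M) with hε
    have hεpos : 0 < ε := lt_min (div_pos hp2 hM0) (div_pos (by linarith) hM0)
    have hεM1 : ε * M ≤ p.2 := by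
      have h := min_le_left (p.2 / M) ((p.1 - p.2) / M)
      calc ε * M ≤ (p.2 / M) * M := by nlinarith
      _ = p.2 := by field_simp
    have hεM2 : ε * M ≤ p.1 - p.2 := by
      have h := min_le_right (p.2 / M) ((p.1 - p.2) / M)
      calc ε * M ≤ ((p.1 - p.2) / M) * M := by nlinarith
      _ = p.1 - p.2 := by field_simp
    have hb1 : 0 ≤ M + (p.2 - q.2) := by
      have := neg_abs_le (p.2 - q.2)
      have := abs_nonneg (p.1 - p.2 - (q.1 - q.2))
      linarith
    have hb2 : 0 ≤ M + (p.1 - p.2 - (q.1 - q.2)) := by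
      have := neg_abs_le (p.1 - p.2 - (q.1 - q.2))
      have := abs_nonneg (p.2 - q.2)
      linarith
    set q' : Pt := p + ε • (p - q) with hq'
    have hq'1 : q'.1 = p.1 + ε * (p.1 - q.1) := rfl
    have hq'2 : q'.2 = p.2 + ε * (p.2 - q.2) := rfl
    have key1 : 0 ≤ q'.2 := by
      have h := mul_nonneg hεpos.le hb1
      rw [mul_add] at h
      rw [hq'2]; linarith
    have key2 : q'.2 ≤ q'.1 := by
      have h := mul_nonneg hεpos.le hb2
      rw [mul_add] at h
      rw [hq'1, hq'2]; nlinarith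
    have hq'K : q' ∈ Kc := ⟨key1, key2⟩
    have hmem : p ∈ openSegment ℝ q q' := by
      refine ⟨ε / (1 + ε), 1 / (1 + ε), by positivity, by positivity, ?_, ?_⟩
      · field_simp; ring
      · refine Prod.ext ?_ ?_
        · show ε / (1 + ε) * q.1 + 1 / (1 + ε) * (p.1 + ε * (p.1 - q.1)) = p.1
          field_simp; ring
        · show ε / (1 + ε) * q.2 + 1 / (1 + ε) * (p.2 + ε * (p.2 - q.2)) = p.2
          field_simp; ring
    exact hext hq hq'K hpσ hmem
  · push_neg at hint
    have hbd : ∀ p ∈ σ, p.2 = 0 ∨ p.2 = p.1 := by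
      intro p hp
      rcases eq_or_lt_of_le (hsub hp).1 with h | h
      · exact Or.inl h.symm
      · exact Or.inr (le_antisymm (hsub hp).2 (hint p hp h))
    by_cases h01 : ∃ p ∈ σ, p.2 = 0 ∧ 0 < p.1
    · by_cases h02 : ∃ p ∈ σ, p.2 = p.1 ∧ 0 < p.1
      · exfalso
        obtain ⟨p, hpσ, hp2, hp1⟩ := h01
        obtain ⟨q, hqσ, hq2, hq1⟩ := h02
        have hm : (1/2 : ℝ) • p + (1/2 : ℝ) • q ∈ σ :=
          hconv hpσ hqσ (by norm_num) (by norm_num) (by norm_num)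
        have hm1 : ((1/2 : ℝ) • p + (1/2 : ℝ) • q).1 = (1/2) * p.1 + (1/2) * q.1 := rfl
        have hm2 : ((1/2 : ℝ) • p + (1/2 : ℝ) • q).2 = (1/2) * p.2 + (1/2) * q.2 := rfl
        rcases hbd _ hm with h | h
        · rw [hm2, hp2, hq2] at h; linarith
        · rw [hm1, hm2, hp2, hq2] at h; linarith
      · right; left
        push_neg at h02
        obtain ⟨a, haσ, ha2, ha1⟩ := h01
        have h0K : ((0, 0) : Pt) ∈ Kc := ⟨le_refl 0, le_refl 0⟩
        have hstep : ∀ b : ℝ, a.1 < b → ((b, 0) : Pt) ∈ σ ∧ ((0, 0) : Pt) ∈ σ := by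
          intro b hb
          have hb0 : (b : ℝ) ≠ 0 := by linarith
          have hbK : ((b, 0) : Pt) ∈ Kc := ⟨le_refl 0, by simp; linarith⟩
          have hmem : a ∈ openSegment ℝ ((0, 0) : Pt) ((b, 0) : Pt) := by
            refine ⟨1 - a.1 / b, a.1 / b, ?_, ?_, by ring, ?_⟩
            · have : a.1 / b < 1 := (div_lt_one (by linarith)).2 hb
              linarith
            · exact div_pos ha1 (by linarith)
            · refine Prod.ext ?_ ?_
              · show (1 - a.1 / b) * 0 + a.1 / b * b = a.1
                field_simp; ring
              · show (1 - a.1 / b) * 0 + a.1 / b * 0 = a.2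
                rw [ha2]; ring
          have h := hext h0K hbK haσ hmem
          exact ⟨hext hbK h0K haσ (by rw [openSegment_symm]; exact hmem), h⟩
        have h0σ : ((0, 0) : Pt) ∈ σ := (hstep (a.1 + 1) (by linarith)).2
        refine Set.Subset.antisymm ?_ ?_
        · intro p hp
          rcases hbd p hp with h | h
          · exact ⟨le_trans (hsub hp).1 (h ▸ (hsub hp).2), h⟩
          · have h2 : 0 ≤ p.1 := le_trans (hsub hp).1 (hsub hp).2
            have h3 : p.1 = 0 := le_antisymm (h02 p hp h) h2
            exact ⟨le_of_eq h3.symm, by rw [h, h3]⟩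
        · intro z hz
          obtain ⟨hz1, hz2⟩ := hz
          set b : ℝ := z.1 + a.1 + 1 with hbdef
          have hb0 : (b : ℝ) ≠ 0 := by simp [hbdef]; linarith
          have hbσ : ((b, 0) : Pt) ∈ σ := (hstep b (by linarith)).1
          have hcomb : z = (1 - z.1 / b) • ((0, 0) : Pt) + (z.1 / b) • ((b, 0) : Pt) := by
            refine Prod.ext ?_ ?_
            · show z.1 = (1 - z.1 / b) * 0 + z.1 / b * b
              field_simp; ring
            · show z.2 = (1 - z.1 / b) * 0 + z.1 / b * 0
              rw [hz2]; ring
          rw [hcomb]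
          refine hconv h0σ hbσ ?_ ?_ (by ring)
          · have : z.1 / b ≤ 1 := by
              apply div_le_one_of_le₀ <;> linarith
            linarith
          · exact div_nonneg hz1 (by linarith)
    · by_cases h02 : ∃ p ∈ σ, p.2 = p.1 ∧ 0 < p.1
      · right; right; left
        push_neg at h01
        obtain ⟨a, haσ, ha2, ha1⟩ := h02
        have h0K : ((0, 0) : Pt) ∈ Kc := ⟨le_refl 0, le_refl 0⟩
        have hstep : ∀ b : ℝ, a.1 < b → ((b, b) : Pt) ∈ σ ∧ ((0, 0) : Pt) ∈ σ := by
          intro b hb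
          have hb0 : (b : ℝ) ≠ 0 := by linarith
          have hbK : ((b, b) : Pt) ∈ Kc := ⟨by simp; linarith, le_refl b⟩
          have hmem : a ∈ openSegment ℝ ((0, 0) : Pt) ((b, b) : Pt) := by
            refine ⟨1 - a.1 / b, a.1 / b, ?_, ?_, by ring, ?_⟩
            · have : a.1 / b < 1 := (div_lt_one (by linarith)).2 hb
              linarith
            · exact div_pos ha1 (by linarith)
            · refine Prod.ext ?_ ?_
              · show (1 - a.1 / b) * 0 + a.1 / b * b = a.1
                field_simp; ring
              · show (1 - a.1 / b) * 0 + a.1 / b * b = a.2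
                rw [ha2]; field_simp; ring
          have h := hext h0K hbK haσ hmem
          exact ⟨hext hbK h0K haσ (by rw [openSegment_symm]; exact hmem), h⟩
        have h0σ : ((0, 0) : Pt) ∈ σ := (hstep (a.1 + 1) (by linarith)).2
        refine Set.Subset.antisymm ?_ ?_
        · intro p hp
          rcases hbd p hp with h | h
          · have h2 : 0 ≤ p.1 := le_trans (hsub hp).1 (hsub hp).2
            have h3 : p.1 = 0 := le_antisymm (h01 p hp h) h2
            exact ⟨le_of_eq h3.symm, by rw [h, h3]⟩
          · exact ⟨le_trans (hsub hp).1 (h ▸ le_refl _), h⟩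
        · intro z hz
          obtain ⟨hz1, hz2⟩ := hz
          set b : ℝ := z.1 + a.1 + 1 with hbdef
          have hb0 : (b : ℝ) ≠ 0 := by simp [hbdef]; linarith
          have hbσ : ((b, b) : Pt) ∈ σ := (hstep b (by linarith)).1
          have hcomb : z = (1 - z.1 / b) • ((0, 0) : Pt) + (z.1 / b) • ((b, b) : Pt) := by
            refine Prod.ext ?_ ?_
            · show z.1 = (1 - z.1 / b) * 0 + z.1 / b * b
              field_simp; ring
            · show z.2 = (1 - z.1 / b) * 0 + z.1 / b * b
              rw [hz2]; field_simp; ring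
          rw [hcomb]
          refine hconv h0σ hbσ ?_ ?_ (by ring)
          · have : z.1 / b ≤ 1 := by
              apply div_le_one_of_le₀ <;> linarith
            linarith
          · exact div_nonneg hz1 (by linarith)
      · left
        push_neg at h01 h02
        have hsub0 : σ ⊆ {((0, 0) : Pt)} := by
          intro p hp
          have h2 : 0 ≤ p.1 := le_trans (hsub hp).1 (hsub hp).2
          rcases hbd p hp with h | h
          · have h1 : p.1 = 0 := le_antisymm (h01 p hp h) h2
            exact Set.mem_singleton_iff.2 (Prod.ext h1 h)
          · have h1 : p.1 = 0 := le_antisymm (h02 p hp h) h2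
            exact Set.mem_singleton_iff.2 (Prod.ext h1 (by rw [h, h1]))
        exact (Set.Nonempty.subset_singleton_iff hne).1 hsub0

lemma isFaceOf_singleton_argmax {Δ : Set Pt} {w : Pt} (hwΔ : w ∈ Δ) (φ ψ : Pt → ℝ)
    (hφ : ∀ (a b : ℝ) (x y : Pt), φ (a • x + b • y) = a * φ x + b * φ y)
    (hψ : ∀ (a b : ℝ) (x y : Pt), ψ (a • x + b • y) = a * ψ x + b * ψ y)
    (hφb : ∀ x ∈ Δ, φ x ≤ φ w)
    (hψb : ∀ x ∈ Δ, φ x = φ w → ψ x ≤ ψ w)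
    (hinj : ∀ x ∈ Δ, φ x = φ w → ψ x = ψ w → x = w) :
    IsFaceOf {w} Δ := by
  refine ⟨⟨w, rfl⟩, convex_singleton w, Set.singleton_subset_iff.2 hwΔ, ?_⟩
  rintro x₁ hx₁ x₂ hx₂ z hz hop
  have hzw : z = w := hz
  subst hzw
  obtain ⟨a, b, ha, hb, hab, hcomb⟩ := hop
  have h4 : a * φ z + b * φ z = φ z := by rw [← add_mul, hab, one_mul]
  have hφc : a * φ x₁ + b * φ x₂ = φ z := by rw [← hφ, hcomb]
  have e1 : φ x₁ = φ z := le_antisymm (hφb _ hx₁) (le_of_mul_le_mul_left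
    (by nlinarith [mul_le_mul_of_nonneg_left (hφb _ hx₂) hb.le]) ha)
  have e2 : φ x₂ = φ z := le_antisymm (hφb _ hx₂) (le_of_mul_le_mul_left
    (by nlinarith [mul_le_mul_of_nonneg_left (hφb _ hx₁) ha.le]) hb)
  have h5 : a * ψ z + b * ψ z = ψ z := by rw [← add_mul, hab, one_mul]
  have hψc : a * ψ x₁ + b * ψ x₂ = ψ z := by rw [← hψ, hcomb]
  have f1 : ψ x₁ = ψ z := le_antisymm (hψb _ hx₁ e1) (le_of_mul_le_mul_left
    (by nlinarith [mul_le_mul_of_nonneg_left (hψb _ hx₂ e2) hb.le]) ha)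
  have f2 : ψ x₂ = ψ z := le_antisymm (hψb _ hx₂ e2) (le_of_mul_le_mul_left
    (by nlinarith [mul_le_mul_of_nonneg_left (hψb _ hx₁ e1) ha.le]) hb)
  exact hinj _ hx₁ e1 f1

section ST
variable {s t : ℝ} (hs : 0 < s) (hst : -s < t) (ht : t < 0)

include hs hst ht in
lemma setDim_hex : setDim (convexHull ℝ {((0, 0) : Pt), ((s + t, 0) : Pt), ((s, s) : Pt),
    ((t - s, s) : Pt), ((0, t) : Pt), ((s, t) : Pt)}) = 2 := by
  refine setDim_eq_two (p := ((0,0) : Pt)) (q := ((s+t, 0) : Pt)) (r := ((s,s) : Pt))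
    (subset_convexHull ℝ _ (by simp)) (subset_convexHull ℝ _ (by simp))
    (subset_convexHull ℝ _ (by simp)) ?_
  show (s + t - 0) * (s - 0) - (0 - 0) * (s - 0) ≠ 0
  nlinarith


include hs hst ht in
lemma cone_compat : ConeCompat (XrayST s t) Kc ((0, 0) : Pt) := by
  classical
  have hs_t : 0 < s + t := by linarith
  have hs_mt : 0 < s - t := by linarith
  set r : ℝ := min (min (s + t) s) (s * (s + t) / (s - t)) with hr
  have hr0 : 0 < r := lt_min (lt_min hs_t hs) (by positivity)
  have hr1 : r ≤ s + t := le_trans (min_le_left _ _) (min_le_left _ _)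
  have hr2 : r ≤ s := le_trans (min_le_left _ _) (min_le_right _ _)
  have hr3 : r ≤ s * (s + t) / (s - t) := min_le_right _ _
  set Hex : Set Pt := convexHull ℝ {((0, 0) : Pt), ((s + t, 0) : Pt), ((s, s) : Pt),
    ((t - s, s) : Pt), ((0, t) : Pt), ((s, t) : Pt)} with hHex
  have hHexConv : Convex ℝ Hex := convex_convexHull ℝ _
  have hAH : ((0, 0) : Pt) ∈ Hex := subset_convexHull ℝ _ (Set.mem_insert _ _)
  have hBH : ((s + t, 0) : Pt) ∈ Hex :=
    subset_convexHull ℝ _ (Set.mem_insert_iff.2 (Or.inr (Set.mem_insert _ _)))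
  have hCH : ((s, s) : Pt) ∈ Hex :=
    subset_convexHull ℝ _ (Set.mem_insert_iff.2 (Or.inr (Set.mem_insert_iff.2
      (Or.inr (Set.mem_insert _ _)))))
  -- key containment: Kc ∩ ball ⊆ Hex
  have hKU : ∀ z : Pt, z ∈ Kc → dist z ((0, 0) : Pt) < r → z ∈ Hex := by
    intro z hz hdist
    have hd : max |z.1| |z.2| < r := by
      rw [Prod.dist_eq] at hdist
      simpa [Real.dist_eq] using hdist
    have hd1 : |z.1| < r := (le_max_left _ _).trans_lt hd
    have hd2 : |z.2| < r := (le_max_right _ _).trans_lt hd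
    set α : ℝ := (z.1 - z.2) / (s + t) with hα
    set β : ℝ := z.2 / s with hβ
    have hα0 : 0 ≤ α := div_nonneg (by linarith [hz.2]) hs_t.le
    have hβ0 : 0 ≤ β := div_nonneg hz.1 hs.le
    have hkey : s * z.1 + t * z.2 ≤ s * (s + t) := by
      have h3 : r * (s - t) ≤ s * (s + t) := (le_div_iff₀ hs_mt).1 hr3
      have h4 : t * z.2 ≤ (-t) * |z.2| := by
        rw [neg_mul]
        have h5 := le_abs_self (t * z.2)
        rw [abs_mul, abs_of_neg ht] at h5
        linarith
      have h6 : s * z.1 ≤ s * |z.1| :=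
        mul_le_mul_of_nonneg_left (le_abs_self z.1) hs.le
      have h7 : s * |z.1| ≤ s * r := mul_le_mul_of_nonneg_left hd1.le hs.le
      have h8 : (-t) * |z.2| ≤ (-t) * r :=
        mul_le_mul_of_nonneg_left hd2.le (by linarith)
      nlinarith
    have hαβ : α + β ≤ 1 := by
      rw [hα, hβ, div_add_div _ _ (ne_of_gt hs_t) (ne_of_gt hs), div_le_one (by positivity)]
      nlinarith
    have hne0 : α + β ≠ 0 → True := fun _ => trivial
    have hzcomb : z = α • ((s + t, 0) : Pt) + β • ((s, s) : Pt) := by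
      refine Prod.ext ?_ ?_
      · show z.1 = α * (s + t) + β * s
        rw [hα, hβ]; field_simp; ring
      · show z.2 = α * 0 + β * s
        rw [hβ]; field_simp; ring
    by_cases h0 : α + β = 0
    · have hα' : α = 0 := by linarith
      have hβ' : β = 0 := by linarith
      rw [hzcomb, hα', hβ']
      simp only [zero_smul, add_zero]; exact hAH
    · have hαβ0 : 0 < α + β := lt_of_le_of_ne (by linarith) (Ne.symm h0)
      have hc1 : (α + β) * (α / (α + β)) = α := by field_simp
      have hc2 : (α + β) * (β / (α + β)) = β := by field_simp
      have hm : (α / (α + β)) • ((s + t, 0) : Pt) + (β / (α + β)) • ((s, s) : Pt) ∈ Hex :=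
        hHexConv hBH hCH (by positivity) (by positivity) (by field_simp)
      have hfinal : (1 - (α + β)) • ((0, 0) : Pt)
          + (α + β) • ((α / (α + β)) • ((s + t, 0) : Pt) + (β / (α + β)) • ((s, s) : Pt))
          = α • ((s + t, 0) : Pt) + β • ((s, s) : Pt) := by
        rw [smul_add, smul_smul, smul_smul, hc1, hc2]
        have hz0 : ((0, 0) : Pt) = (0 : Pt) := rfl
        rw [hz0, smul_zero, zero_add]
      rw [hzcomb, ← hfinal]
      exact hHexConv hAH hm (by linarith) (by linarith) (by ring)
  -- basic disequalities between the faces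
  have h0K : ((0, 0) : Pt) ∈ Kc := ⟨le_refl 0, le_refl 0⟩
  have h10e1 : ((1, 0) : Pt) ∈ e1 := ⟨zero_le_one, rfl⟩
  have h11e2 : ((1, 1) : Pt) ∈ e2 := ⟨zero_le_one, rfl⟩
  have h00e1 : ((0, 0) : Pt) ∈ e1 := ⟨le_refl 0, rfl⟩
  have h00e2 : ((0, 0) : Pt) ∈ e2 := ⟨le_refl 0, rfl⟩
  have h10K : ((1, 0) : Pt) ∈ Kc := ⟨le_refl 0, zero_le_one⟩
  have h11K : ((1, 1) : Pt) ∈ Kc := ⟨zero_le_one, le_refl 1⟩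
  have hne1 : e1 ≠ ({((0, 0) : Pt)} : Set Pt) := by
    intro h
    have h' : ((1, 0) : Pt) ∈ ({((0, 0) : Pt)} : Set Pt) := h ▸ h10e1
    exact one_ne_zero (congrArg Prod.fst (Set.eq_of_mem_singleton h'))
  have hne2 : e2 ≠ ({((0, 0) : Pt)} : Set Pt) := by
    intro h
    have h' : ((1, 1) : Pt) ∈ ({((0, 0) : Pt)} : Set Pt) := h ▸ h11e2
    exact one_ne_zero (congrArg Prod.fst (Set.eq_of_mem_singleton h'))
  have hne21 : e2 ≠ e1 := by
    intro h
    have h' : ((1, 1) : Pt) ∈ e1 := h ▸ h11e2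
    exact one_ne_zero h'.2
  have hKne0 : Kc ≠ ({((0, 0) : Pt)} : Set Pt) := by
    intro h
    have h' : ((1, 0) : Pt) ∈ ({((0, 0) : Pt)} : Set Pt) := h ▸ h10K
    exact one_ne_zero (congrArg Prod.fst (Set.eq_of_mem_singleton h'))
  have hKne1 : Kc ≠ e1 := by
    intro h
    have h' : ((1, 1) : Pt) ∈ e1 := h ▸ h11K
    exact one_ne_zero h'.2
  have hKne2 : Kc ≠ e2 := by
    intro h
    have h' : ((1, 0) : Pt) ∈ e2 := h ▸ h10K
    exact zero_ne_one h'.2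
  -- dimensions
  have hABne : ((0, 0) : Pt) ≠ ((s + t, 0) : Pt) := by
    intro h
    have h1 : (0 : ℝ) = s + t := congrArg Prod.fst h
    linarith
  have hACne : ((0, 0) : Pt) ≠ ((s, s) : Pt) := by
    intro h
    have h1 : (0 : ℝ) = s := congrArg Prod.fst h
    linarith
  have hdim_e1 : setDim e1 = 1 := by
    refine setDim_eq_one (p := ((0, 0) : Pt)) (q := ((1, 0) : Pt)) h00e1 h10e1
      (fun h => one_ne_zero (congrArg Prod.fst h).symm) ?_
    intro z hz
    refine ⟨z.1, Prod.ext ?_ ?_⟩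
    · show z.1 = z.1 * (1 - 0) + 0; ring
    · show z.2 = z.1 * (0 - 0) + 0; rw [hz.2]; ring
  have hdim_e2 : setDim e2 = 1 := by
    refine setDim_eq_one (p := ((0, 0) : Pt)) (q := ((1, 1) : Pt)) h00e2 h11e2
      (fun h => one_ne_zero (congrArg Prod.fst h).symm) ?_
    intro z hz
    refine ⟨z.1, Prod.ext ?_ ?_⟩
    · show z.1 = z.1 * (1 - 0) + 0; ring
    · show z.2 = z.1 * (1 - 0) + 0; rw [hz.2]; ring
  have hdim_segAB : setDim (segment ℝ ((0, 0) : Pt) ((s + t, 0) : Pt)) = 1 :=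
    setDim_segment hABne
  have hdim_segAC : setDim (segment ℝ ((0, 0) : Pt) ((s, s) : Pt)) = 1 :=
    setDim_segment hACne
  have hdim_Kc : setDim Kc = 2 := by
    refine setDim_eq_two (p := ((0, 0) : Pt)) (q := ((1, 0) : Pt)) (r := ((1, 1) : Pt))
      h0K h10K h11K ?_
    show (1 - 0) * (1 - 0) - (0 - 0) * (1 - 0) ≠ (0 : ℝ)
    norm_num
  have hdim_Hex : setDim Hex = 2 := by
    rw [hHex]; exact setDim_hex hs hst ht
  -- the neighborhood and assignment
  refine ⟨Metric.ball ((0, 0) : Pt) r, Metric.ball_mem_nhds _ hr0, ?_⟩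
  refine ⟨fun σ => if σ = ({((0, 0) : Pt)} : Set Pt) then ({((0, 0) : Pt)} : Set Pt)
    else if σ = e1 then segment ℝ ((0, 0) : Pt) ((s + t, 0) : Pt)
    else if σ = e2 then segment ℝ ((0, 0) : Pt) ((s, s) : Pt)
    else Hex, ?_, ?_⟩
  · intro σ hσ
    have hcoord : ∀ z : Pt, z ∈ Metric.ball ((0, 0) : Pt) r → |z.1| < r ∧ |z.2| < r := by
      intro z hzU
      have hdist := Metric.mem_ball.1 hzU
      rw [Prod.dist_eq] at hdist
      have hd : max |z.1| |z.2| < r := by simpa [Real.dist_eq] using hdist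
      exact ⟨(le_max_left _ _).trans_lt hd, (le_max_right _ _).trans_lt hd⟩
    rcases faces_Kc hσ with h | h | h | h <;> subst h <;> dsimp only
    · rw [if_pos rfl]
      exact ⟨Set.mem_insert _ _, rfl, Set.inter_subset_left⟩
    · rw [if_neg hne1, if_pos rfl]
      refine ⟨by simp [XrayST], by rw [hdim_segAB, hdim_e1], ?_⟩
      rintro z ⟨⟨hz1, hz2⟩, hzU⟩
      have hd1 := (hcoord z hzU).1
      have hzb : z.1 ≤ s + t := by
        have := le_abs_self z.1
        linarith [hd1]
      refine ⟨1 - z.1 / (s + t), z.1 / (s + t), ?_, div_nonneg hz1 hs_t.le, by ring, ?_⟩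
      · have : z.1 / (s + t) ≤ 1 := (div_le_one hs_t).2 hzb
        linarith
      · refine Prod.ext ?_ ?_
        · show (1 - z.1 / (s + t)) * 0 + z.1 / (s + t) * (s + t) = z.1
          field_simp; ring
        · show (1 - z.1 / (s + t)) * 0 + z.1 / (s + t) * 0 = z.2
          rw [hz2]; ring
    · rw [if_neg hne2, if_neg hne21, if_pos rfl]
      refine ⟨by simp [XrayST], by rw [hdim_segAC, hdim_e2], ?_⟩
      rintro z ⟨⟨hz1, hz2⟩, hzU⟩
      have hd1 := (hcoord z hzU).1
      have hzb : z.1 ≤ s := by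
        have := le_abs_self z.1
        linarith [hd1]
      refine ⟨1 - z.1 / s, z.1 / s, ?_, div_nonneg hz1 hs.le, by ring, ?_⟩
      · have : z.1 / s ≤ 1 := (div_le_one hs).2 hzb
        linarith
      · refine Prod.ext ?_ ?_
        · show (1 - z.1 / s) * 0 + z.1 / s * s = z.1
          field_simp; ring
        · show (1 - z.1 / s) * 0 + z.1 / s * s = z.2
          rw [hz2]; field_simp; ring
    · rw [if_neg hKne0, if_neg hKne1, if_neg hKne2]
      refine ⟨by rw [hHex]; simp [XrayST], by rw [hdim_Hex, hdim_Kc], ?_⟩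
      rintro z ⟨hzK, hzU⟩
      exact hKU z hzK (Metric.mem_ball.1 hzU)
  · intro σ σ' hσ hσ' hss
    rcases faces_Kc hσ with h | h | h | h <;> rcases faces_Kc hσ' with h' | h' | h' | h' <;>
      subst h <;> subst h' <;> dsimp only
    · rw [if_pos rfl]
    · rw [if_pos rfl, if_neg hne1, if_pos rfl]
      exact Set.singleton_subset_iff.2 (left_mem_segment ℝ _ _)
    · rw [if_pos rfl, if_neg hne2, if_neg hne21, if_pos rfl]
      exact Set.singleton_subset_iff.2 (left_mem_segment ℝ _ _)
    · rw [if_pos rfl, if_neg hKne0, if_neg hKne1, if_neg hKne2]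
      exact Set.singleton_subset_iff.2 hAH
    · exact absurd (congrArg Prod.fst (Set.eq_of_mem_singleton (hss h10e1))) one_ne_zero
    · rw [if_neg hne1, if_pos rfl]
    · exact absurd (hss h10e1).2 zero_ne_one
    · rw [if_neg hne1, if_pos rfl, if_neg hKne0, if_neg hKne1, if_neg hKne2]
      exact hHexConv.segment_subset hAH hBH
    · exact absurd (congrArg Prod.fst (Set.eq_of_mem_singleton (hss h11e2))) one_ne_zero
    · exact absurd (hss h11e2).2 one_ne_zero
    · rw [if_neg hne2, if_neg hne21, if_pos rfl]
    · rw [if_neg hne2, if_neg hne21, if_pos rfl, if_neg hKne0, if_neg hKne1, if_neg hKne2]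
      exact hHexConv.segment_subset hAH hCH
    · exact absurd (congrArg Prod.fst (Set.eq_of_mem_singleton (hss h10K))) one_ne_zero
    · exact absurd (hss h11K).2 one_ne_zero
    · exact absurd (hss h10K).2 zero_ne_one
    · rw [if_neg hKne0, if_neg hKne1, if_neg hKne2]

include hs hst ht in
lemma singleton_face_cases {Δ : Set Pt} {X : Set Pt → Set Pt}
    (hX1 : ∀ σ, IsFaceOf σ Δ → X σ ∈ XrayST s t ∧ setDim (X σ) = setDim σ ∧ σ ⊆ X σ)
    {w : Pt} (hw : IsFaceOf {w} Δ) :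
    w = ((0, 0) : Pt) ∨ w = ((s + t, 0) : Pt) ∨ w = ((s, s) : Pt) ∨ w = ((t - s, s) : Pt) ∨
      w = ((0, t) : Pt) ∨ w = ((s, t) : Pt) := by
  obtain ⟨hmem, hdim, hsub⟩ := hX1 _ hw
  rw [setDim_singleton] at hdim
  have hwX : w ∈ X {w} := hsub rfl
  simp only [XrayST, Set.mem_insert_iff, Set.mem_singleton_iff] at hmem
  rcases hmem with h | h | h | h | h | h | h | h | h | h | h | h | h | h | h | h
  · exact Or.inl (by rw [h] at hwX; exact hwX)
  · exact Or.inr (Or.inl (by rw [h] at hwX; exact hwX))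
  · exact Or.inr (Or.inr (Or.inl (by rw [h] at hwX; exact hwX)))
  · exact Or.inr (Or.inr (Or.inr (Or.inl (by rw [h] at hwX; exact hwX))))
  · exact Or.inr (Or.inr (Or.inr (Or.inr (Or.inl (by rw [h] at hwX; exact hwX)))))
  · exact Or.inr (Or.inr (Or.inr (Or.inr (Or.inr (by rw [h] at hwX; exact hwX)))))
  · rw [h, setDim_segment (fun he => ht.ne (congrArg Prod.snd he).symm)] at hdim
    exact absurd hdim one_ne_zero
  · rw [h, setDim_segment (fun he => by
      have h1 : (0 : ℝ) = s + t := congrArg Prod.fst he; linarith)] at hdim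
    exact absurd hdim one_ne_zero
  · rw [h, setDim_segment (fun he => by
      have h1 : (0 : ℝ) = s := congrArg Prod.fst he; linarith)] at hdim
    exact absurd hdim one_ne_zero
  · rw [h, setDim_segment (fun he => by
      have h1 : t = (0 : ℝ) := congrArg Prod.snd he; linarith)] at hdim
    exact absurd hdim one_ne_zero
  · rw [h, setDim_segment (fun he => by
      have h1 : (0 : ℝ) = s := congrArg Prod.fst he; linarith)] at hdim
    exact absurd hdim one_ne_zero
  · rw [h, setDim_segment (fun he => by
      have h1 : s = t - s := congrArg Prod.fst he; linarith)] at hdim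
    exact absurd hdim one_ne_zero
  · rw [h, setDim_segment (fun he => by
      have h1 : s = t := congrArg Prod.snd he; linarith)] at hdim
    exact absurd hdim one_ne_zero
  · rw [h, setDim_segment (fun he => by
      have h1 : s = (0 : ℝ) := congrArg Prod.snd he; linarith)] at hdim
    exact absurd hdim one_ne_zero
  · rw [h, setDim_segment (fun he => by
      have h1 : t - s = (0 : ℝ) := congrArg Prod.fst he; linarith)] at hdim
    exact absurd hdim one_ne_zero
  · rw [h, setDim_hex hs hst ht] at hdim
    exact absurd hdim (by norm_num)


include hs hst ht in
lemma no_ext : ∀ Δ : Set Pt, IsPolytope Δ → IsExtensionOf Δ Kc ((0, 0) : Pt) →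
    ¬ PolyCompat (XrayST s t) Δ := by
  rintro Δ ⟨Fs, hFne, hΔeq⟩ ⟨U, hU, hUeq⟩ ⟨X, hX1, -⟩
  have hs_t : 0 < s + t := by linarith
  have hΔconv : Convex ℝ Δ := hΔeq ▸ convex_convexHull ℝ _
  have hΔcomp : IsCompact Δ := hΔeq ▸ Set.Finite.isCompact_convexHull (𝕜 := ℝ) Fs.finite_toSet
  obtain ⟨η, hη0, hball⟩ := Metric.mem_nhds_iff.1 hU
  have h00U : ((0, 0) : Pt) ∈ U := mem_of_mem_nhds hU
  have h00K : ((0, 0) : Pt) ∈ Kc := ⟨le_refl 0, le_refl 0⟩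
  have h0Δ : ((0, 0) : Pt) ∈ Δ := by
    have hmem : ((0, 0) : Pt) ∈ Kc ∩ U := ⟨h00K, h00U⟩
    rw [hUeq] at hmem
    exact hmem.1
  -- Step 1 : Δ ⊆ Kc
  have hΔK : Δ ⊆ Kc := by
    intro z hz
    by_contra hzK
    set ε : ℝ := min (1 / 2) (η / (2 * (‖z‖ + 1))) with hε
    have hz1 : (0 : ℝ) < ‖z‖ + 1 := by positivity
    have hεpos : 0 < ε := lt_min (by norm_num) (by positivity)
    have hεle : ε ≤ η / (2 * (‖z‖ + 1)) := min_le_right _ _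
    have hεzΔ : ε • z ∈ Δ := by
      have hcv := hΔconv h0Δ hz (by linarith [min_le_left (1/2 : ℝ) (η / (2 * (‖z‖ + 1)))] :
        (0 : ℝ) ≤ 1 - ε) hεpos.le (by ring)
      have hc : (1 - ε) • ((0, 0) : Pt) + ε • z = ε • z := by
        have h0 : ((0, 0) : Pt) = 0 := rfl
        rw [h0, smul_zero, zero_add]
      rwa [hc] at hcv
    have hεzU : ε • z ∈ U := by
      apply hball
      rw [Metric.mem_ball]
      have hd : dist (ε • z) ((0, 0) : Pt) = ‖ε • z‖ := by
        have h0 : ((0, 0) : Pt) = 0 := rfl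
        rw [h0, dist_zero_right]
      rw [hd, norm_smul, Real.norm_eq_abs, abs_of_pos hεpos]
      have h1 : ε * ‖z‖ ≤ ε * (‖z‖ + 1) := by nlinarith [norm_nonneg z]
      have h2 : ε * (‖z‖ + 1) ≤ (η / (2 * (‖z‖ + 1))) * (‖z‖ + 1) := by nlinarith
      have h3 : (η / (2 * (‖z‖ + 1))) * (‖z‖ + 1) = η / 2 := by field_simp
      linarith
    have hεzK : ε • z ∈ Kc := by
      have hmem : ε • z ∈ Δ ∩ U := ⟨hεzΔ, hεzU⟩
      rw [← hUeq] at hmem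
      exact hmem.1
    have hk1 : 0 ≤ ε * z.2 := hεzK.1
    have hk2 : ε * z.2 ≤ ε * z.1 := hεzK.2
    exact hzK ⟨by nlinarith [hk1], le_of_mul_le_mul_left hk2 hεpos⟩
  -- Step 2 : two nearby points of Δ on the two edges
  set δ : ℝ := η / 2 with hδdef
  have hδ0 : 0 < δ := by positivity
  have hδη : δ < η := by rw [hδdef]; linarith
  have hpδ : ((δ, 0) : Pt) ∈ Δ := by
    have hK : ((δ, 0) : Pt) ∈ Kc := ⟨le_refl 0, hδ0.le⟩
    have hUm : ((δ, 0) : Pt) ∈ U := by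
      apply hball
      rw [Metric.mem_ball]
      have hdd : dist ((δ, 0) : Pt) ((0, 0) : Pt) = δ := by
        rw [Prod.dist_eq,
          show dist ((δ, 0) : Pt).1 ((0, 0) : Pt).1 = dist δ 0 from rfl,
          show dist ((δ, 0) : Pt).2 ((0, 0) : Pt).2 = dist (0 : ℝ) 0 from rfl,
          Real.dist_eq, Real.dist_eq, sub_zero, sub_zero, abs_of_pos hδ0, abs_zero,
          max_eq_left hδ0.le]
      rw [hdd]
      exact hδη
    have hmem : ((δ, 0) : Pt) ∈ Kc ∩ U := ⟨hK, hUm⟩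
    rw [hUeq] at hmem
    exact hmem.1
  have hqδ : ((δ, δ) : Pt) ∈ Δ := by
    have hK : ((δ, δ) : Pt) ∈ Kc := ⟨hδ0.le, le_refl δ⟩
    have hUm : ((δ, δ) : Pt) ∈ U := by
      apply hball
      rw [Metric.mem_ball]
      have hdd : dist ((δ, δ) : Pt) ((0, 0) : Pt) = δ := by
        rw [Prod.dist_eq,
          show dist ((δ, δ) : Pt).1 ((0, 0) : Pt).1 = dist δ 0 from rfl,
          show dist ((δ, δ) : Pt).2 ((0, 0) : Pt).2 = dist δ 0 from rfl,
          Real.dist_eq, sub_zero, abs_of_pos hδ0, max_self]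
      rw [hdd]
      exact hδη
    have hmem : ((δ, δ) : Pt) ∈ Kc ∩ U := ⟨hK, hUm⟩
    rw [hUeq] at hmem
    exact hmem.1
  -- Step 3 : (s+t,0) ∈ Δ
  have hF1comp : IsCompact (Δ ∩ {x : Pt | x.2 = 0}) :=
    hΔcomp.inter_right (isClosed_eq continuous_snd continuous_const)
  obtain ⟨w, hwF, hwmax⟩ := hF1comp.exists_isMaxOn ⟨((δ, 0) : Pt), hpδ, rfl⟩
    continuous_fst.continuousOn
  rw [isMaxOn_iff] at hwmax
  have hw2 : w.2 = 0 := hwF.2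
  have hw1 : 0 < w.1 := lt_of_lt_of_le hδ0 (hwmax ((δ, 0) : Pt) ⟨hpδ, rfl⟩)
  have hwface : IsFaceOf {w} Δ := by
    refine isFaceOf_singleton_argmax hwF.1 (fun p => -p.2) (fun p => p.1) ?_ ?_ ?_ ?_ ?_
    · intro a b x y; show -(a * x.2 + b * y.2) = a * -x.2 + b * -y.2; ring
    · intro a b x y; rfl
    · intro x hx
      show -x.2 ≤ -w.2
      rw [hw2]
      have := (hΔK hx).1
      linarith
    · intro x hx hφ
      refine hwmax x ⟨hx, ?_⟩
      show x.2 = 0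
      rw [neg_inj.1 hφ, hw2]
    · intro x hx hφ hψ
      exact Prod.ext hψ (neg_inj.1 hφ)
  have hwB : w = ((s + t, 0) : Pt) := by
    rcases singleton_face_cases hs hst ht hX1 hwface with h | h | h | h | h | h
    · exfalso; have h1 : w.1 = 0 := congrArg Prod.fst h; linarith
    · exact h
    · exfalso; have h1 : w.2 = s := congrArg Prod.snd h; rw [hw2] at h1; linarith
    · exfalso; have h1 : w.2 = s := congrArg Prod.snd h; rw [hw2] at h1; linarith
    · exfalso; have h1 : w.2 = t := congrArg Prod.snd h; rw [hw2] at h1; linarith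
    · exfalso; have h1 : w.2 = t := congrArg Prod.snd h; rw [hw2] at h1; linarith
  have hBΔ : ((s + t, 0) : Pt) ∈ Δ := hwB ▸ hwF.1
  -- Step 4 : (s,s) ∈ Δ
  have hF2comp : IsCompact (Δ ∩ {x : Pt | x.2 = x.1}) :=
    hΔcomp.inter_right (isClosed_eq continuous_snd continuous_fst)
  obtain ⟨w', hw'F, hw'max⟩ := hF2comp.exists_isMaxOn ⟨((δ, δ) : Pt), hqδ, rfl⟩
    continuous_fst.continuousOn
  rw [isMaxOn_iff] at hw'max
  have hw'2 : w'.2 = w'.1 := hw'F.2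
  have hw'1 : 0 < w'.1 := lt_of_lt_of_le hδ0 (hw'max ((δ, δ) : Pt) ⟨hqδ, rfl⟩)
  have hw'face : IsFaceOf {w'} Δ := by
    refine isFaceOf_singleton_argmax hw'F.1 (fun p => p.2 - p.1) (fun p => p.1) ?_ ?_ ?_ ?_ ?_
    · intro a b x y
      show (a * x.2 + b * y.2) - (a * x.1 + b * y.1) = a * (x.2 - x.1) + b * (y.2 - y.1); ring
    · intro a b x y; rfl
    · intro x hx
      show x.2 - x.1 ≤ w'.2 - w'.1
      have := (hΔK hx).2
      rw [hw'2]
      linarith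
    · intro x hx hφ
      refine hw'max x ⟨hx, ?_⟩
      show x.2 = x.1
      have h1 : x.2 - x.1 = w'.2 - w'.1 := hφ
      rw [hw'2] at h1
      linarith
    · intro x hx hφ hψ
      refine Prod.ext hψ ?_
      have h1 : x.2 - x.1 = w'.2 - w'.1 := hφ
      have h2 : x.1 = w'.1 := hψ
      linarith
  have hw'C : w' = ((s, s) : Pt) := by
    rcases singleton_face_cases hs hst ht hX1 hw'face with h | h | h | h | h | h
    · exfalso; have h1 : w'.1 = 0 := congrArg Prod.fst h; linarith
    · exfalso
      have h1 : w'.1 = s + t := congrArg Prod.fst h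
      have h2 : w'.2 = 0 := congrArg Prod.snd h
      rw [hw'2, h1] at h2; linarith
    · exact h
    · exfalso
      have h1 : w'.1 = t - s := congrArg Prod.fst h
      have h2 : w'.2 = s := congrArg Prod.snd h
      rw [hw'2, h1] at h2; linarith
    · exfalso; have h1 : w'.1 = 0 := congrArg Prod.fst h; linarith
    · exfalso
      have h1 : w'.1 = s := congrArg Prod.fst h
      have h2 : w'.2 = t := congrArg Prod.snd h
      rw [hw'2, h1] at h2; linarith
  have hCΔ : ((s, s) : Pt) ∈ Δ := hw'C ▸ hw'F.1
  -- Step 5 : the max of φ = s x + t y over Δ is s(s+t)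
  have hφcont : Continuous (fun p : Pt => s * p.1 + t * p.2) :=
    (continuous_const.mul continuous_fst).add (continuous_const.mul continuous_snd)
  obtain ⟨u, huΔ, humax⟩ := hΔcomp.exists_isMaxOn ⟨_, h0Δ⟩ hφcont.continuousOn
  rw [isMaxOn_iff] at humax
  set M : ℝ := s * u.1 + t * u.2 with hM
  have hGcomp : IsCompact (Δ ∩ {x : Pt | s * x.1 + t * x.2 = M}) :=
    hΔcomp.inter_right (isClosed_eq hφcont continuous_const)
  obtain ⟨u', hu'G, hu'max⟩ := hGcomp.exists_isMaxOn ⟨u, huΔ, rfl⟩ continuous_fst.continuousOn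
  rw [isMaxOn_iff] at hu'max
  have hu'φ : s * u'.1 + t * u'.2 = M := hu'G.2
  have hu'face : IsFaceOf {u'} Δ := by
    refine isFaceOf_singleton_argmax hu'G.1 (fun p => s * p.1 + t * p.2) (fun p => p.1)
      ?_ ?_ ?_ ?_ ?_
    · intro a b x y
      show s * (a * x.1 + b * y.1) + t * (a * x.2 + b * y.2)
        = a * (s * x.1 + t * x.2) + b * (s * y.1 + t * y.2); ring
    · intro a b x y; rfl
    · intro x hx
      show s * x.1 + t * x.2 ≤ s * u'.1 + t * u'.2
      rw [hu'φ]
      exact humax x hx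
    · intro x hx hφ
      refine hu'max x ⟨hx, ?_⟩
      show s * x.1 + t * x.2 = M
      have h1 : s * x.1 + t * x.2 = s * u'.1 + t * u'.2 := hφ
      rw [hu'φ] at h1
      exact h1
    · intro x hx hφ hψ
      refine Prod.ext hψ ?_
      have h1 : s * x.1 + t * x.2 = s * u'.1 + t * u'.2 := hφ
      have h2 : x.1 = u'.1 := hψ
      have h3 : t * x.2 = t * u'.2 := by rw [h2] at h1; linarith
      exact mul_left_cancel₀ ht.ne h3
  have hMB : s * (s + t) + t * 0 ≤ M := humax _ hBΔ
  have hu'K : u' ∈ Kc := hΔK hu'G.1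
  have hMeq : M = s * (s + t) := by
    rcases singleton_face_cases hs hst ht hX1 hu'face with h | h | h | h | h | h <;>
      rw [h] at hu'φ
    · exfalso
      have h1 : s * 0 + t * 0 = M := hu'φ
      nlinarith
    · have h1 : s * (s + t) + t * 0 = M := hu'φ
      linarith
    · have h1 : s * s + t * s = M := hu'φ
      nlinarith
    · exfalso
      rw [h] at hu'K
      have h1 : s ≤ t - s := hu'K.2
      linarith
    · exfalso
      rw [h] at hu'K
      have h1 : (0 : ℝ) ≤ t := hu'K.1
      linarith
    · exfalso
      rw [h] at hu'K
      have h1 : (0 : ℝ) ≤ t := hu'K.1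
      linarith
  -- Step 6 : the level-set face F₃ and the final contradiction
  have hF3 : IsFaceOf {x ∈ Δ | s * x.1 + t * x.2 = s * (s + t)} Δ := by
    refine isFaceOf_levelSet hΔconv (fun p => s * p.1 + t * p.2) ?_ (s * (s + t)) ?_
      ⟨_, hBΔ, ?_⟩
    · intro a b x y
      show s * (a * x.1 + b * y.1) + t * (a * x.2 + b * y.2)
        = a * (s * x.1 + t * x.2) + b * (s * y.1 + t * y.2); ring
    · intro x hx
      rw [← hMeq]
      exact humax x hx
    · show s * (s + t) + t * 0 = s * (s + t); ring
  have hBF3 : ((s + t, 0) : Pt) ∈ {x ∈ Δ | s * x.1 + t * x.2 = s * (s + t)} :=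
    ⟨hBΔ, by show s * (s + t) + t * 0 = s * (s + t); ring⟩
  have hCF3 : ((s, s) : Pt) ∈ {x ∈ Δ | s * x.1 + t * x.2 = s * (s + t)} :=
    ⟨hCΔ, by show s * s + t * s = s * (s + t); ring⟩
  have hdimF3 : setDim {x ∈ Δ | s * x.1 + t * x.2 = s * (s + t)} = 1 := by
    refine setDim_eq_one hBF3 hCF3 (fun he => by
      have h1 : (0 : ℝ) = s := congrArg Prod.snd he; linarith) ?_
    intro z hz
    have h1 : s * z.1 + t * z.2 = s * (s + t) := hz.2
    refine ⟨z.2 / s, Prod.ext ?_ ?_⟩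
    · show z.1 = z.2 / s * (s - (s + t)) + (s + t)
      field_simp
      linear_combination h1
    · show z.2 = z.2 / s * (s - 0) + 0
      field_simp; ring
  obtain ⟨hmemX, hdimX, hsubX⟩ := hX1 _ hF3
  rw [hdimF3] at hdimX
  have hBX := hsubX hBF3
  have hCX := hsubX hCF3
  simp only [XrayST, Set.mem_insert_iff, Set.mem_singleton_iff] at hmemX
  rcases hmemX with h | h | h | h | h | h | h | h | h | h | h | h | h | h | h | h
  · rw [h, setDim_singleton] at hdimX; exact zero_ne_one hdimX
  · rw [h, setDim_singleton] at hdimX; exact zero_ne_one hdimX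
  · rw [h, setDim_singleton] at hdimX; exact zero_ne_one hdimX
  · rw [h, setDim_singleton] at hdimX; exact zero_ne_one hdimX
  · rw [h, setDim_singleton] at hdimX; exact zero_ne_one hdimX
  · rw [h, setDim_singleton] at hdimX; exact zero_ne_one hdimX
  · -- segment (0,0) (0,t)
    rw [h] at hBX
    obtain ⟨a, b, ha, hb, hab, h1, h2⟩ := seg_coord hBX
    norm_num at h1
    linarith
  · -- segment (0,0) (s+t,0)
    rw [h] at hCX
    obtain ⟨a, b, ha, hb, hab, h1, h2⟩ := seg_coord hCX
    norm_num at h2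
    linarith
  · -- segment (0,t) (s,t)
    rw [h] at hBX
    obtain ⟨a, b, ha, hb, hab, h1, h2⟩ := seg_coord hBX
    norm_num at h2
    have h3 : a * t + b * t = t := by rw [← add_mul, hab, one_mul]
    linarith
  · -- segment (s,t) (s+t,0)
    rw [h] at hCX
    obtain ⟨a, b, ha, hb, hab, h1, h2⟩ := seg_coord hCX
    norm_num at h2
    nlinarith [mul_nonpos_of_nonneg_of_nonpos ha ht.le]
  · -- segment (0,0) (s,s)
    rw [h] at hBX
    obtain ⟨a, b, ha, hb, hab, h1, h2⟩ := seg_coord hBX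
    norm_num at h1 h2
    rcases h2 with h2 | h2
    · rw [h2] at h1; linarith
    · linarith
  · -- segment (s,s) (t-s,s)
    rw [h] at hBX
    obtain ⟨a, b, ha, hb, hab, h1, h2⟩ := seg_coord hBX
    norm_num at h2
    have h3 : a * s + b * s = s := by rw [← add_mul, hab, one_mul]
    linarith
  · -- segment (s,s) (s,t)
    rw [h] at hBX
    obtain ⟨a, b, ha, hb, hab, h1, h2⟩ := seg_coord hBX
    norm_num at h1
    have h3 : a * s + b * s = s := by rw [← add_mul, hab, one_mul]
    linarith
  · -- segment (t-s,s) (s+t,0)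
    rw [h] at hCX
    obtain ⟨a, b, ha, hb, hab, h1, h2⟩ := seg_coord hCX
    norm_num at h1 h2
    have h3 : s * (1 - a) = 0 := by linear_combination h2
    rcases mul_eq_zero.1 h3 with h4 | h4
    · linarith
    · have ha1 : a = 1 := by linarith
      have hb0 : b = 0 := by linarith
      rw [ha1, hb0] at h1
      linarith
  · -- segment (t-s,s) (0,t)
    rw [h] at hCX
    obtain ⟨a, b, ha, hb, hab, h1, h2⟩ := seg_coord hCX
    norm_num at h1
    nlinarith [mul_nonpos_of_nonneg_of_nonpos ha (by linarith : t - s ≤ 0)]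
  · -- the hexagon
    rw [h, setDim_hex hs hst ht] at hdimX
    exact absurd hdimX (by norm_num)

end ST

/-- For `0 < s` and `-s < t < 0`, the x-ray `𝒳(s,t)` does not satisfy the
extension criterion: there exists a strictly convex cone compatible with
`𝒳(s,t)` that does not extend to any convex polytope compatible with
`𝒳(s,t)`. -/
theorem XrayST_not_extension_criterion_of_neg (s t : ℝ)
    (hs : 0 < s) (hst : -s < t) (ht : t < 0) :
    (∃ (C : Set Pt) (v : Pt), IsConeWithVertex C v ∧ ContainsNoLine C ∧
      ConeCompat (XrayST s t) C v ∧
      ∀ Δ : Set Pt, IsPolytope Δ → IsExtensionOf Δ C v →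
        ¬ PolyCompat (XrayST s t) Δ) ∧
    ¬ ExtensionCriterion (XrayST s t) := by
  have hmain : ∃ (C : Set Pt) (v : Pt), IsConeWithVertex C v ∧ ContainsNoLine C ∧
      ConeCompat (XrayST s t) C v ∧
      ∀ Δ : Set Pt, IsPolytope Δ → IsExtensionOf Δ C v →
        ¬ PolyCompat (XrayST s t) Δ :=
    ⟨Kc, ((0, 0) : Pt), Kc_cone, Kc_noline, cone_compat hs hst ht,
      fun Δ hp he => no_ext hs hst ht Δ hp he⟩
  refine ⟨hmain, ?_⟩
  intro hEC
  obtain ⟨C, v, h1, h2, h3, h4⟩ := hmain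
  obtain ⟨Δ, hΔ1, hΔ2, hΔ3⟩ := hEC C v h1 h2 h3
  exact h4 Δ hΔ1 hΔ2 hΔ3
end
end

section
/- Let n, r be natural numbers and ξ : Fin n → ℤ^r. Let the torus (ℂ \ {0})^r act on ℂⁿ = (Fin n → ℂ) by (t · z)_i = (Π_{k} t_k^{ξ(i)(k)}) · z_i, where the exponents are integer powers. Let J ⊆ Fin n and let y ∈ ℂⁿ satisfy y_i ≠ 0 if and only if i ∈ J. Let j ∈ J with ξ(j) ≠ 0, and suppose there exists η ∈ ℝ^r with Σ_k η_k ξ(j)(k) = 0 and Σ_k η_k ξ(i)(k) < 0 for every i ∈ J with i ≠ j. Then every z ∈ ℂⁿ with z_j ≠ 0 and z_k = 0 for all k ≠ j lies in the topological closure of the orbit {t · y : t ∈ (ℂ \ {0})^r}. -/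
open Set

noncomputable section

/-- Let the torus `(ℂ \ {0})^r` act on `ℂⁿ` by
`(t • z) i = (∏ k, t k ^ ξ i k) * z i` (integer powers).  Let `y ∈ ℂⁿ` with
`y i ≠ 0 ↔ i ∈ J`, and let `j ∈ J` with `ξ j ≠ 0`.  If there is `η ∈ ℝ^r`
with `⟨η, ξ j⟩ = 0` and `⟨η, ξ i⟩ < 0` for every `i ∈ J` with `i ≠ j`, then
every point of the punctured coordinate axis
`E_{j} = {z : z j ≠ 0 ∧ z k = 0 for k ≠ j}` lies in the closure of the orbit
of `y`. -/
theorem axis_subset_closure_orbit (n r : ℕ) (ξ : Fin n → (Fin r → ℤ))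
    (J : Finset (Fin n)) (y : Fin n → ℂ) (hy : ∀ i, y i ≠ 0 ↔ i ∈ J)
    (j : Fin n) (hj : j ∈ J) (hξj : ξ j ≠ 0)
    (η : Fin r → ℝ) (hη0 : ∑ k, η k * (ξ j k : ℝ) = 0)
    (hηneg : ∀ i ∈ J, i ≠ j → ∑ k, η k * (ξ i k : ℝ) < 0)
    (z : Fin n → ℂ) (hzj : z j ≠ 0) (hz : ∀ k, k ≠ j → z k = 0) :
    z ∈ closure {z' : Fin n → ℂ | ∃ t : Fin r → ℂˣ,
      z' = fun i => ((∏ k, t k ^ ξ i k : ℂˣ) : ℂ) * y i} := by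
  classical
  have hyj : y j ≠ 0 := (hy j).mpr hj
  set w : ℂ := z j / y j with hw
  have hwne : w ≠ 0 := div_ne_zero hzj hyj
  obtain ⟨k0, hk0⟩ : ∃ k, ξ j k ≠ 0 := by
    by_contra h
    push_neg at h
    exact hξj (funext h)
  set c : ℂ := Complex.exp (Complex.log w / (ξ j k0 : ℂ)) with hc
  have hcne : c ≠ 0 := Complex.exp_ne_zero _
  have hcpow : c ^ (ξ j k0) = w := by
    rw [hc, ← Complex.exp_int_mul]
    have hcast : ((ξ j k0 : ℂ)) ≠ 0 := by exact_mod_cast hk0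
    rw [mul_div_cancel₀ _ hcast, Complex.exp_log hwne]
  set u : Fin r → ℂˣ := fun k => if k = k0 then Units.mk0 c hcne else 1 with hu
  set A : Fin n → ℂ := fun i => ∏ k, ((u k : ℂ)) ^ ξ i k with hA
  have hAj : A j = w := by
    show (∏ k : Fin r, ((u k : ℂ)) ^ ξ j k) = w
    rw [Finset.prod_eq_single k0]
    · simp [hu, hcpow]
    · intro k _ hk; simp [hu, hk]
    · simp
  set t : ℝ → Fin r → ℂˣ :=
    fun s k => Units.mk0 (Complex.exp (s * η k)) (Complex.exp_ne_zero _) * u k with ht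
  set cc : Fin n → ℝ := fun i => ∑ k, η k * (ξ i k : ℝ) with hcc
  have key : ∀ (s : ℝ) (i : Fin n),
      ((∏ k, t s k ^ ξ i k : ℂˣ) : ℂ) = (Real.exp (s * cc i) : ℂ) * A i := by
    intro s i
    have h1 : ((∏ k, t s k ^ ξ i k : ℂˣ) : ℂ) = ∏ k, ((t s k : ℂ)) ^ ξ i k := by
      push_cast
      rfl
    rw [h1]
    have h2 : ∀ k, ((t s k : ℂ)) ^ ξ i k
        = Complex.exp ((ξ i k : ℂ) * (s * η k)) * ((u k : ℂ)) ^ ξ i k := by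
      intro k
      rw [ht]
      simp only [Units.val_mul, Units.val_mk0]
      rw [mul_zpow, ← Complex.exp_int_mul]
    simp only [h2]
    rw [Finset.prod_mul_distrib, ← Complex.exp_sum, Complex.ofReal_exp, hcc]
    push_cast [Finset.mul_sum]
    congr 1
    exact congrArg Complex.exp (Finset.sum_congr rfl fun k _ => by ring)
  -- the curve of orbit points
  set g : ℝ → Fin n → ℂ :=
    fun s i => ((∏ k, t s k ^ ξ i k : ℂˣ) : ℂ) * y i with hg
  have hmem : ∀ s : ℝ, g s ∈ {z' : Fin n → ℂ | ∃ t : Fin r → ℂˣ,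
      z' = fun i => ((∏ k, t k ^ ξ i k : ℂˣ) : ℂ) * y i} :=
    fun s => ⟨t s, rfl⟩
  have htend : Filter.Tendsto g Filter.atTop (nhds z) := by
    rw [tendsto_pi_nhds]
    intro i
    have hgi : ∀ s, g s i = (Real.exp (s * cc i) : ℂ) * A i * y i := by
      intro s; rw [hg]; simp only []; rw [key]
    simp only [hgi]
    by_cases hij : i = j
    · subst hij
      have hcc0 : cc i = 0 := hη0
      have : ∀ s : ℝ, (Real.exp (s * cc i) : ℂ) * A i * y i = z i := by
        intro s
        rw [hcc0, mul_zero, Real.exp_zero, hAj, hw]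
        push_cast
        rw [one_mul, div_mul_cancel₀ _ hyj]
      simp only [this]
      exact tendsto_const_nhds
    · by_cases hiJ : i ∈ J
      · have hneg : cc i < 0 := hηneg i hiJ hij
        have hz0 : z i = 0 := hz i hij
        rw [hz0]
        have h1 : Filter.Tendsto (fun s : ℝ => s * cc i) Filter.atTop Filter.atBot :=
          Filter.Tendsto.atTop_mul_const_of_neg hneg Filter.tendsto_id
        have h2 : Filter.Tendsto (fun s : ℝ => Real.exp (s * cc i)) Filter.atTop (nhds 0) :=
          Real.tendsto_exp_atBot.comp h1
        have h3 : Filter.Tendsto (fun s : ℝ => ((Real.exp (s * cc i) : ℝ) : ℂ)) Filter.atTop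
            (nhds (((0 : ℝ) : ℂ))) := (Complex.continuous_ofReal.tendsto _).comp h2
        rw [Complex.ofReal_zero] at h3
        have := (h3.mul_const (A i)).mul_const (y i)
        simpa using this
      · have hyi : y i = 0 := by
          by_contra h
          exact hiJ ((hy i).mp h)
        have hz0 : z i = 0 := hz i hij
        simp only [hyi, mul_zero, hz0]
        exact tendsto_const_nhds
  exact mem_closure_of_tendsto htend (Filter.Eventually.of_forall hmem)
end
end

section
/- Let n, r be natural numbers and ξ : Fin n → ℤ^r, and let the torus (ℂ \ {0})^r act on ℂⁿ = (Fin n → ℂ) by (t · z)_i = (Π_{k} t_k^{ξ(i)(k)}) · z_i. Let J ⊆ Fin n, and suppose that for every j ∈ J: ξ(j) ≠ 0 and there exists η ∈ ℝ^r with Σ_k η_k ξ(j)(k) = 0 and Σ_k η_k ξ(i)(k) < 0 for all i ∈ J with i ≠ j. Let y ∈ ℂⁿ satisfy y_i ≠ 0 if and only if i ∈ J, and define φ(z) = Σ_i |z_i|² • ξ(i) ∈ ℝ^r (where ξ(i) is regarded in ℝ^r). Then the convex hull of the image φ(closure of {t · y : t ∈ (ℂ \ {0})^r}) equals the convex cone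 C_J = {Σ_{j ∈ J} a_j • ξ(j) : a_j ≥ 0 for all j ∈ J}. -/
open Set Filter

noncomputable section

lemma mem_closure_orbit_aux (n r : ℕ) (ξ : Fin n → (Fin r → ℤ)) (y : Fin n → ℂ)
    (η u : Fin r → ℝ)
    (hle : ∀ i, y i ≠ 0 → (∑ k, η k * (ξ i k : ℝ)) ≤ 0) :
    (fun i => if (∑ k, η k * (ξ i k : ℝ)) < 0 then 0
      else Complex.exp ((∑ k, u k * (ξ i k : ℝ) : ℝ)) * y i) ∈
      closure {z' : Fin n → ℂ | ∃ t : Fin r → ℂˣ,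
        z' = fun i => ((∏ k, t k ^ ξ i k : ℂˣ) : ℂ) * y i} := by
  set F : ℝ → (Fin n → ℂ) := fun s i =>
    Complex.exp ((s * (∑ k, η k * (ξ i k : ℝ)) + (∑ k, u k * (ξ i k : ℝ)) : ℝ)) * y i with hF
  have hFmem : ∀ s : ℝ, F s ∈ {z' : Fin n → ℂ | ∃ t : Fin r → ℂˣ,
      z' = fun i => ((∏ k, t k ^ ξ i k : ℂˣ) : ℂ) * y i} := by
    intro s
    refine ⟨fun k => Units.mk0 (Complex.exp ((s * η k + u k : ℝ))) (Complex.exp_ne_zero _), ?_⟩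
    funext i
    have hcoe : ((∏ k, (Units.mk0 (Complex.exp ((s * η k + u k : ℝ)))
        (Complex.exp_ne_zero _)) ^ ξ i k : ℂˣ) : ℂ)
        = ∏ k, Complex.exp ((s * η k + u k : ℝ)) ^ ξ i k := by
      push_cast; rfl
    rw [hF]
    simp only [hcoe]
    congr 1
    have hk : ∀ k, Complex.exp ((s * η k + u k : ℝ)) ^ ξ i k
        = Complex.exp ((ξ i k : ℂ) * ((s * η k + u k : ℝ) : ℂ)) := by
      intro k; rw [Complex.exp_int_mul]
    rw [Finset.prod_congr rfl (fun k _ => hk k), ← Complex.exp_sum]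
    congr 1
    push_cast
    rw [Finset.mul_sum, ← Finset.sum_add_distrib]
    exact Finset.sum_congr rfl fun k _ => by ring
  have hev : ∀ᶠ s in (atTop : Filter ℝ), F s ∈ {z' : Fin n → ℂ | ∃ t : Fin r → ℂˣ,
      z' = fun i => ((∏ k, t k ^ ξ i k : ℂˣ) : ℂ) * y i} := Eventually.of_forall hFmem
  have htend : Tendsto F atTop (nhds (fun i => if (∑ k, η k * (ξ i k : ℝ)) < 0 then 0
      else Complex.exp ((∑ k, u k * (ξ i k : ℝ) : ℝ)) * y i)) := by
    rw [tendsto_pi_nhds]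
    intro i
    by_cases hyi : y i = 0
    · have hz : ∀ s : ℝ, F s i = 0 := fun s => by rw [hF]; simp [hyi]
      have hz' : (if (∑ k, η k * (ξ i k : ℝ)) < 0 then 0
          else Complex.exp ((∑ k, u k * (ξ i k : ℝ) : ℝ)) * y i) = 0 := by
        split <;> simp [hyi]
      rw [hz']
      exact (tendsto_congr hz).mpr tendsto_const_nhds
    · rcases lt_or_eq_of_le (hle i hyi) with hlt | heq
      · rw [if_pos hlt]
        have h1 : Tendsto (fun s : ℝ => Real.exp (s * (∑ k, η k * (ξ i k : ℝ))
            + (∑ k, u k * (ξ i k : ℝ)))) atTop (nhds 0) := by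
          apply Real.tendsto_exp_atBot.comp
          apply tendsto_atBot_add_const_right
          exact tendsto_id.atTop_mul_const_of_neg hlt
        have h2 : Tendsto (fun s : ℝ => Complex.exp ((s * (∑ k, η k * (ξ i k : ℝ))
            + (∑ k, u k * (ξ i k : ℝ)) : ℝ)) * y i) atTop (nhds 0) := by
          have h3 := ((Complex.continuous_ofReal.tendsto 0).comp h1).mul_const (y i)
          simpa only [Function.comp_def, Complex.ofReal_exp, Complex.ofReal_zero,
            zero_mul] using h3
        exact h2
      · rw [if_neg (not_lt.mpr heq.ge)]
        have hconst : ∀ s : ℝ, F s i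
            = Complex.exp ((∑ k, u k * (ξ i k : ℝ) : ℝ)) * y i := by
          intro s
          show Complex.exp ((s * (∑ k, η k * (ξ i k : ℝ))
            + (∑ k, u k * (ξ i k : ℝ)) : ℝ)) * y i = _
          rw [heq, mul_zero, zero_add]
        exact (tendsto_congr hconst).mpr tendsto_const_nhds
  exact mem_closure_of_tendsto htend hev

/-- (Lemma 3 of the paper, in the local model.)  Let the torus `(ℂ \ {0})^r`
act on `ℂⁿ` by `(t • z) i = (∏ k, t k ^ ξ i k) * z i` (integer powers), with
integral weights `ξ : Fin n → ℤ^r`.  Suppose that for every `j ∈ J`: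
`ξ j ≠ 0` and there is `η ∈ ℝ^r` with `⟨η, ξ j⟩ = 0` and `⟨η, ξ i⟩ < 0` for
all `i ∈ J`, `i ≠ j`.  If `y i ≠ 0 ↔ i ∈ J` and
`φ(z) = ∑ i, |z i|² • ξ i ∈ ℝ^r`, then the convex hull of the image under
`φ` of the closure of the orbit of `y` is exactly the convex cone
`C_J = {∑ j ∈ J, a j • ξ j : a j ≥ 0}` spanned by the weights `ξ j`, `j ∈ J`. -/
theorem convexHull_momentMap_image_closure_orbit (n r : ℕ)
    (ξ : Fin n → (Fin r → ℤ)) (J : Finset (Fin n))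
    (hJ : ∀ j ∈ J, ξ j ≠ 0 ∧ ∃ η : Fin r → ℝ,
      (∑ k, η k * (ξ j k : ℝ)) = 0 ∧
      ∀ i ∈ J, i ≠ j → (∑ k, η k * (ξ i k : ℝ)) < 0)
    (y : Fin n → ℂ) (hy : ∀ i, y i ≠ 0 ↔ i ∈ J) :
    convexHull ℝ ((fun z : Fin n → ℂ =>
        ∑ i, (‖z i‖) ^ 2 • (fun k => (ξ i k : ℝ))) ''
      closure {z' : Fin n → ℂ | ∃ t : Fin r → ℂˣ,
        z' = fun i => ((∏ k, t k ^ ξ i k : ℂˣ) : ℂ) * y i})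
      = {w : Fin r → ℝ | ∃ a : Fin n → ℝ,
          (∀ j ∈ J, 0 ≤ a j) ∧ w = ∑ j ∈ J, a j • (fun k => (ξ j k : ℝ))} := by
  classical
  have hy0 : ∀ i, i ∉ J → y i = 0 := fun i hi => not_not.mp (mt (hy i).1 hi)
  apply Set.Subset.antisymm
  · -- convexHull (φ '' closure O) ⊆ C
    apply convexHull_min
    · rintro w ⟨z, hz, rfl⟩
      have hzero : ∀ i, i ∉ J → z i = 0 := by
        have hcl : closure {z' : Fin n → ℂ | ∃ t : Fin r → ℂˣ,
            z' = fun i => ((∏ k, t k ^ ξ i k : ℂˣ) : ℂ) * y i}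
            ⊆ {z : Fin n → ℂ | ∀ i, i ∉ J → z i = 0} := by
          apply closure_minimal
          · rintro z ⟨t, rfl⟩ i hi
            simp [hy0 i hi]
          · have heq : {z : Fin n → ℂ | ∀ i, i ∉ J → z i = 0}
                = ⋂ i, ⋂ (_ : i ∉ J), {z : Fin n → ℂ | z i = 0} := by
              ext z; simp
            rw [heq]
            exact isClosed_iInter fun i => isClosed_iInter fun _ =>
              isClosed_eq (continuous_apply i) continuous_const
        exact hcl hz
      refine ⟨fun i => (‖z i‖) ^ 2, fun j _ => sq_nonneg _, ?_⟩
      exact (Finset.sum_subset (Finset.subset_univ J)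
        (fun i _ hi => by rw [hzero i hi]; simp)).symm
    · -- C is convex
      intro x hx x' hx' α β hα hβ hαβ
      obtain ⟨a, ha, rfl⟩ := hx
      obtain ⟨b, hb, rfl⟩ := hx'
      refine ⟨fun j => α * a j + β * b j, fun j hj =>
        add_nonneg (mul_nonneg hα (ha j hj)) (mul_nonneg hβ (hb j hj)), ?_⟩
      rw [Finset.smul_sum, Finset.smul_sum, ← Finset.sum_add_distrib]
      exact Finset.sum_congr rfl fun j _ => by
        rw [smul_smul, smul_smul, ← add_smul]
  · -- C ⊆ convexHull (φ '' closure O)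
    rintro w ⟨a, ha, rfl⟩
    rcases J.eq_empty_or_nonempty with hJe | ⟨j₀, hj₀⟩
    · subst hJe
      rw [Finset.sum_empty]
      apply subset_convexHull ℝ _
      refine ⟨0, subset_closure ⟨1, ?_⟩, by simp⟩
      funext i
      simp [hy0 i (Finset.notMem_empty i)]
    · -- J nonempty
      have hξk : ∀ j ∈ J, ∃ k, ξ j k ≠ 0 := by
        intro j hj
        by_contra h; push_neg at h
        exact (hJ j hj).1 (funext h)
      -- a direction strictly negative on all of J
      have hηall : ∃ η : Fin r → ℝ, ∀ i ∈ J, (∑ k, η k * (ξ i k : ℝ)) < 0 := by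
        by_cases hex : ∃ j₁ ∈ J, j₁ ≠ j₀
        · obtain ⟨j₁, hj₁, hne⟩ := hex
          obtain ⟨-, η₀, hη₀0, hη₀⟩ := hJ j₀ hj₀
          obtain ⟨-, η₁, hη₁0, hη₁⟩ := hJ j₁ hj₁
          refine ⟨η₀ + η₁, fun i hi => ?_⟩
          have hsum : (∑ k, (η₀ + η₁) k * (ξ i k : ℝ))
              = (∑ k, η₀ k * (ξ i k : ℝ)) + (∑ k, η₁ k * (ξ i k : ℝ)) := by
            rw [← Finset.sum_add_distrib]
            exact Finset.sum_congr rfl fun k _ => by simp [add_mul]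
          rw [hsum]
          rcases eq_or_ne i j₀ with rfl | h0
          · rw [hη₀0, zero_add]; exact hη₁ i hi hne.symm
          · rcases eq_or_ne i j₁ with rfl | h1
            · rw [hη₁0, add_zero]; exact hη₀ i hi h0
            · exact add_neg (hη₀ i hi h0) (hη₁ i hi h1)
        · push_neg at hex
          obtain ⟨k₀, hk₀⟩ := hξk j₀ hj₀
          refine ⟨fun k => -(ξ j₀ k : ℝ), fun i hi => ?_⟩
          have hij : i = j₀ := hex i hi
          subst hij
          have hrw : (∑ k, -(ξ i k : ℝ) * (ξ i k : ℝ)) = -(∑ k, ((ξ i k : ℝ)) ^ 2) := by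
            rw [← Finset.sum_neg_distrib]
            exact Finset.sum_congr rfl fun k _ => by ring
          rw [hrw, neg_lt, neg_zero]
          refine Finset.sum_pos' (fun k _ => sq_nonneg _) ⟨k₀, Finset.mem_univ _, ?_⟩
          have : (ξ i k₀ : ℝ) ≠ 0 := Int.cast_ne_zero.mpr hk₀
          positivity
      obtain ⟨ηa, hηa⟩ := hηall
      -- 0 is in the closure of the orbit
      have h0cl : (0 : Fin n → ℂ) ∈ closure {z' : Fin n → ℂ | ∃ t : Fin r → ℂˣ,
          z' = fun i => ((∏ k, t k ^ ξ i k : ℂˣ) : ℂ) * y i} := by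
        have hmem := mem_closure_orbit_aux n r ξ y ηa 0
          (fun i hi => (hηa i ((hy i).1 hi)).le)
        have hzeq : (fun i => if (∑ k, ηa k * (ξ i k : ℝ)) < 0 then 0
            else Complex.exp ((∑ k, (0 : Fin r → ℝ) k * (ξ i k : ℝ) : ℝ)) * y i)
            = (0 : Fin n → ℂ) := by
          funext i
          by_cases hi : i ∈ J
          · rw [if_pos (hηa i hi)]; rfl
          · have := hy0 i hi
            split <;> simp [this]
        rwa [hzeq] at hmem
      have h0img : (0 : Fin r → ℝ) ∈ (fun z : Fin n → ℂ =>
          ∑ i, (‖z i‖) ^ 2 • (fun k => (ξ i k : ℝ))) ''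
        closure {z' : Fin n → ℂ | ∃ t : Fin r → ℂˣ,
          z' = fun i => ((∏ k, t k ^ ξ i k : ℂˣ) : ℂ) * y i} :=
        ⟨0, h0cl, by simp⟩
      -- each ray c • ξ j is in the image
      have hray : ∀ j ∈ J, ∀ c : ℝ, 0 < c →
          (c • (fun k => (ξ j k : ℝ)) : Fin r → ℝ) ∈ (fun z : Fin n → ℂ =>
            ∑ i, (‖z i‖) ^ 2 • (fun k => (ξ i k : ℝ))) ''
          closure {z' : Fin n → ℂ | ∃ t : Fin r → ℂˣ,
            z' = fun i => ((∏ k, t k ^ ξ i k : ℂˣ) : ℂ) * y i} := by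
        intro j hj c hc
        obtain ⟨-, η, hη0, hηneg⟩ := hJ j hj
        obtain ⟨k₀, hk₀⟩ := hξk j hj
        have hyj : y j ≠ 0 := (hy j).2 hj
        have hyjabs : 0 < ‖y j‖ := norm_pos_iff.mpr hyj
        set ρ : ℝ := Real.log (Real.sqrt c / ‖y j‖) with hρ
        set u : Fin r → ℝ := Pi.single k₀ (ρ / (ξ j k₀ : ℝ)) with hu
        have hUj : (∑ k, u k * (ξ j k : ℝ)) = ρ := by
          rw [Finset.sum_eq_single k₀]
          · rw [hu, Pi.single_eq_same, div_mul_cancel₀ _ (Int.cast_ne_zero.mpr hk₀)]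
          · intro b _ hb
            rw [hu, Pi.single_eq_of_ne hb, zero_mul]
          · intro h; exact absurd (Finset.mem_univ k₀) h
        have hle : ∀ i, y i ≠ 0 → (∑ k, η k * (ξ i k : ℝ)) ≤ 0 := by
          intro i hi
          rcases eq_or_ne i j with rfl | hne
          · exact le_of_eq hη0
          · exact (hηneg i ((hy i).1 hi) hne).le
        have hmem := mem_closure_orbit_aux n r ξ y η u hle
        refine ⟨_, hmem, ?_⟩
        dsimp only
        rw [Finset.sum_eq_single j]
        · have h0j : ¬ (∑ k, η k * (ξ j k : ℝ)) < 0 := not_lt.mpr hη0.ge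
          rw [if_neg h0j, hUj, norm_mul, Complex.norm_exp, Complex.ofReal_re,
            Real.exp_log (by positivity), div_mul_cancel₀ _ (ne_of_gt hyjabs),
            Real.sq_sqrt hc.le]
        · intro i _ hne
          by_cases hiJ : i ∈ J
          · rw [if_pos (hηneg i hiJ hne)]; simp
          · have := hy0 i hiJ
            split <;> simp [this]
        · intro h; exact absurd (Finset.mem_univ j) h
      -- assemble via centerMass
      have hm : (0 : ℝ) < (J.card : ℝ) := by
        exact_mod_cast Finset.card_pos.mpr ⟨j₀, hj₀⟩
      set p : Fin n → (Fin r → ℝ) :=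
        fun j => ((J.card : ℝ) * a j) • (fun k => (ξ j k : ℝ)) with hp
      have hpmem : ∀ j ∈ J, p j ∈ (fun z : Fin n → ℂ =>
          ∑ i, (‖z i‖) ^ 2 • (fun k => (ξ i k : ℝ))) ''
        closure {z' : Fin n → ℂ | ∃ t : Fin r → ℂˣ,
          z' = fun i => ((∏ k, t k ^ ξ i k : ℂˣ) : ℂ) * y i} := by
        intro j hj
        rcases (ha j hj).lt_or_eq with hlt | heqa
        · exact hray j hj _ (mul_pos hm hlt)
        · rw [hp]; dsimp only; rw [← heqa, mul_zero, zero_smul]; exact h0img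
      have hcm := Finset.centerMass_mem_convexHull (R := ℝ) J (w := fun _ => (1 : ℝ))
        (fun i _ => zero_le_one) (by simpa using hm) hpmem
      have hcmval : J.centerMass (fun _ => (1 : ℝ)) p
          = ∑ j ∈ J, a j • (fun k => (ξ j k : ℝ)) := by
        rw [Finset.centerMass]
        simp only [Finset.sum_const, nsmul_eq_mul, mul_one, one_smul]
        have hps : ∑ j ∈ J, p j
            = (J.card : ℝ) • ∑ j ∈ J, a j • (fun k => (ξ j k : ℝ)) := by
          rw [Finset.smul_sum]
          exact Finset.sum_congr rfl fun j _ => by rw [hp]; dsimp only; rw [mul_smul]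
        rw [hps, smul_smul, inv_mul_cancel₀ (ne_of_gt hm), one_smul]
      rw [← hcmval]
      exact hcm
end
end
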